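/- The dual Banach space F(X)* is linearly isometric to Lip_0(X), via the map T defined by (Tφ)(x) = φ(m_{xe}), whose inverse sends f ∈ Lip_0(X) to the functional m ↦ Σ_{x∈X} f(x) m(x). -/
import Mathlib


/-- A molecule: finitely supported real function summing to zero. -/
def IsMolecule {X : Type*} (m : X →₀ ℝ) : Prop := m.sum (fun _ v => v) = 0

/-- The elementary molecule `m_{pq} = χ_{p} - χ_{q}`. -/
noncomputable def mol {X : Type*} (p q : X) : X →₀ ℝ :=
  Finsupp.single p 1 - Finsupp.single q 1

/-- The Arens-Eells seminorm. -/
noncomputable def aeNorm {X : Type*} [MetricSpace X] (m : X →₀ ℝ) : ℝ :=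
  sInf { c | ∃ (n : ℕ) (a : Fin n → ℝ) (p q : Fin n → X),
    m = ∑ i, a i • mol (p i) (q i) ∧ c = ∑ i, |a i| * dist (p i) (q i) }

lemma linC_mol {X : Type*} (f : X → ℝ) (p q : X) :
    Finsupp.linearCombination ℝ f (mol p q) = f p - f q := by
  simp [mol, Finsupp.linearCombination_single]

lemma mol_repr {X : Type*} (e : X) (m : X →₀ ℝ) (h : IsMolecule m) :
    ∑ x ∈ m.support, m x • mol x e = m := by
  have h0 : ∑ x ∈ m.support, m x = 0 := by
    simpa [IsMolecule, Finsupp.sum] using h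
  calc ∑ x ∈ m.support, m x • mol x e
      = (∑ x ∈ m.support, Finsupp.single x (m x))
        - (∑ x ∈ m.support, m x) • Finsupp.single e 1 := by
        simp [mol, smul_sub, Finset.sum_sub_distrib, Finset.sum_smul,
          Finsupp.smul_single]
    _ = m := by
        rw [h0, zero_smul, sub_zero]
        exact Finsupp.sum_single m

lemma aeSet_nonempty {X : Type*} [MetricSpace X] (e : X) (m : X →₀ ℝ) (h : IsMolecule m) :
    Set.Nonempty { c | ∃ (n : ℕ) (a : Fin n → ℝ) (p q : Fin n → X),
      m = ∑ i, a i • mol (p i) (q i) ∧ c = ∑ i, |a i| * dist (p i) (q i) } := by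
  classical
  set s := m.support with hs
  let eq : s ≃ Fin s.card := s.equivFin
  refine ⟨_, s.card, fun i => m (eq.symm i), fun i => (eq.symm i : X), fun _ => e, ?_, rfl⟩
  conv_lhs => rw [← mol_repr e m h]
  rw [← Finset.sum_coe_sort s (fun x => m x • mol x e)]
  exact (Equiv.sum_comp eq.symm (fun x : s => m (x : X) • mol (x : X) e)).symm

lemma aeSet_bddBelow {X : Type*} [MetricSpace X] (m : X →₀ ℝ) :
    BddBelow { c | ∃ (n : ℕ) (a : Fin n → ℝ) (p q : Fin n → X),
      m = ∑ i, a i • mol (p i) (q i) ∧ c = ∑ i, |a i| * dist (p i) (q i) } := by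
  refine ⟨0, fun c hc => ?_⟩
  obtain ⟨n, a, p, q, -, rfl⟩ := hc
  exact Finset.sum_nonneg fun i _ => mul_nonneg (abs_nonneg _) dist_nonneg

/-- If `f` is `K`-Lipschitz then `|S f m| ≤ K * c` for every element `c` of the set
defining `aeNorm m`. -/
lemma lip_bound {X : Type*} [MetricSpace X] {f : X → ℝ} {K : NNReal}
    (hf : LipschitzWith K f) {m : X →₀ ℝ} {c : ℝ}
    (hc : c ∈ { c | ∃ (n : ℕ) (a : Fin n → ℝ) (p q : Fin n → X),
      m = ∑ i, a i • mol (p i) (q i) ∧ c = ∑ i, |a i| * dist (p i) (q i) }) :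
    |Finsupp.linearCombination ℝ f m| ≤ (K : ℝ) * c := by
  obtain ⟨n, a, p, q, rfl, rfl⟩ := hc
  have hval : Finsupp.linearCombination ℝ f (∑ i, a i • mol (p i) (q i))
      = ∑ i, a i * (f (p i) - f (q i)) := by
    rw [map_sum]
    congr 1; ext i
    rw [map_smul, linC_mol]; rfl
  rw [hval, Finset.mul_sum]
  refine (Finset.abs_sum_le_sum_abs _ _).trans (Finset.sum_le_sum fun i _ => ?_)
  rw [abs_mul]
  have hd : |f (p i) - f (q i)| ≤ (K : ℝ) * dist (p i) (q i) := by
    have := hf.dist_le_mul (p i) (q i)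
    simpa [Real.dist_eq] using this
  calc |a i| * |f (p i) - f (q i)| ≤ |a i| * ((K : ℝ) * dist (p i) (q i)) :=
        mul_le_mul_of_nonneg_left hd (abs_nonneg _)
    _ = (K : ℝ) * (|a i| * dist (p i) (q i)) := by ring

/-- The dual of the Lipschitz-free space `F(X)` is linearly isometric to `Lip₀(X)`:
(1) a function `f` with `f e = 0` is `K`-Lipschitz iff the associated linear functional
`S f : m ↦ Σ_x f(x) m(x)` has norm `≤ K` on molecules (so `S` is a linear isometry of
`Lip₀(X)` into the dual);
(2) the map `T : φ ↦ (x ↦ φ(m_{xe}))` is a left inverse of `S`;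
(3) every linear functional `φ` which is bounded with respect to the Arens-Eells norm
agrees on molecules with `S (T φ)`, so `T` and `S` are mutually inverse. -/
theorem free_space_dual_eq_lip0 {X : Type*} [MetricSpace X] (e : X) :
    (∀ (f : X → ℝ) (K : NNReal), f e = 0 →
      (LipschitzWith K f ↔
        ∀ m : X →₀ ℝ, IsMolecule m →
          |Finsupp.linearCombination ℝ f m| ≤ (K : ℝ) * aeNorm m)) ∧
    (∀ f : X → ℝ, f e = 0 → ∀ x : X,
      Finsupp.linearCombination ℝ f (mol x e) = f x) ∧
    (∀ φ : (X →₀ ℝ) →ₗ[ℝ] ℝ,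
      (∃ C : ℝ, ∀ m : X →₀ ℝ, IsMolecule m → |φ m| ≤ C * aeNorm m) →
      ∀ m : X →₀ ℝ, IsMolecule m →
        φ m = Finsupp.linearCombination ℝ (fun x => φ (mol x e)) m) := by
  refine ⟨?_, ?_, ?_⟩
  · intro f K hfe
    constructor
    · intro hf m hm
      rcases eq_zero_or_pos K with hK | hK
      · obtain ⟨c, hc⟩ := aeSet_nonempty e m hm
        have := lip_bound hf hc
        rw [hK] at this ⊢
        simpa using this
      · have hKpos : (0 : ℝ) < (K : ℝ) := by exact_mod_cast hK
        have hlb : |Finsupp.linearCombination ℝ f m| / (K : ℝ) ≤ aeNorm m := by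
          refine le_csInf (aeSet_nonempty e m hm) fun c hc => ?_
          rw [div_le_iff₀ hKpos, mul_comm]
          exact lip_bound hf hc
        calc |Finsupp.linearCombination ℝ f m|
            = (K : ℝ) * (|Finsupp.linearCombination ℝ f m| / (K : ℝ)) := by
              field_simp
          _ ≤ (K : ℝ) * aeNorm m := by
              exact mul_le_mul_of_nonneg_left hlb hKpos.le
    · intro hb
      refine LipschitzWith.of_dist_le_mul fun x y => ?_
      have hmol : IsMolecule (mol x y) := by
        classical
        simp [IsMolecule, mol, Finsupp.sum_sub_index, Finsupp.sum_single_index]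
      have h1 := hb (mol x y) hmol
      rw [linC_mol] at h1
      have h2 : aeNorm (mol x y) ≤ dist x y := by
        refine csInf_le (aeSet_bddBelow _) ?_
        exact ⟨1, fun _ => 1, fun _ => x, fun _ => y, by simp, by simp⟩
      have h3 : (K : ℝ) * aeNorm (mol x y) ≤ (K : ℝ) * dist x y :=
        mul_le_mul_of_nonneg_left h2 K.coe_nonneg
      calc dist (f x) (f y) = |f x - f y| := Real.dist_eq _ _
        _ ≤ (K : ℝ) * dist x y := (h1.trans h3)
  · intro f hfe x
    simp [linC_mol, hfe]
  · intro φ _ m hm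
    classical
    conv_lhs => rw [← mol_repr e m hm]
    rw [map_sum, Finsupp.linearCombination_apply, Finsupp.sum]
    congr 1; ext x
    rw [map_smul]
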